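/- Let m ≥ 1 be an integer, α ∈ ℂ with α ≠ 0, and let f_1, …, f_m ∈ ℂ satisfy f_s ≠ 0 and f_s ≠ α for all s. Let F be the (m+1)×(m+1) complex matrix with diagonal entries F_{k,k} = −f_{m+1−k}/(f_{m+1−k} − α) for k = 1,…,m, superdiagonal entries F_{k,k+1} = α/(α·(f_{m+1−k} − α)) = 1/(f_{m+1−k} − α) for k = 1,…,m (i.e. the Darboux matrix evaluated at spectral parameter λ = α), bottom row entries F_{m+1,1} = f_m⋯f_1 and F_{m+1,m+1} = −1, and all other entries 0. Then the vector K = (1, f_m, f_m f_{m−1}, …, f_m f_{m−1}⋯f_1)ᵀ ∈ ℂ^{m+1} satisfies F·K = 0, and the kernel of F is exactly the one-dimensional span of K. -/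

import Mathlib

/-- The Darboux matrix `F[f, α, λ]` of the Bogoyavlensky lattice, evaluated at the
spectral parameter `λ = α`, has one-dimensional kernel spanned by
`K = (1, f_m, f_m f_{m-1}, …, f_m ⋯ f_1)ᵀ`. -/
theorem bogoyavlensky_darboux_matrix_kernel
    (m : ℕ) (hm : 1 ≤ m) (α : ℂ) (hα : α ≠ 0)
    (f : ℕ → ℂ) (hf0 : ∀ s, 1 ≤ s → s ≤ m → f s ≠ 0)
    (hfα : ∀ s, 1 ≤ s → s ≤ m → f s ≠ α)
    (F : Matrix (Fin (m + 1)) (Fin (m + 1)) ℂ)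
    (hF : ∀ k l : Fin (m + 1),
      F k l =
        if (k : ℕ) < m then
          (if l = k then -f (m - (k : ℕ)) / (f (m - (k : ℕ)) - α)
           else if (l : ℕ) = (k : ℕ) + 1 then 1 / (f (m - (k : ℕ)) - α)
           else 0)
        else if (l : ℕ) = 0 then ∏ s ∈ Finset.range m, f (s + 1)
        else if (l : ℕ) = m then -1
        else 0)
    (K : Fin (m + 1) → ℂ)
    (hK : ∀ i : Fin (m + 1), K i = ∏ t ∈ Finset.range (i : ℕ), f (m - t)) :
    F.mulVec K = 0 ∧ LinearMap.ker F.mulVecLin = Submodule.span ℂ {K} := by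
  have hd : ∀ k, k < m → f (m - k) - α ≠ 0 := fun k hk =>
    sub_ne_zero.mpr (hfα (m - k) (by omega) (by omega))
  -- product identity
  have hprod : (∏ s ∈ Finset.range m, f (s + 1)) = ∏ t ∈ Finset.range m, f (m - t) := by
    rw [← Finset.prod_range_reflect]
    apply Finset.prod_congr rfl
    intro j hj
    simp only [Finset.mem_range] at hj
    congr 1
    omega
  -- row formula for k < m
  have hrow : ∀ (v : Fin (m+1) → ℂ) (k : ℕ) (hk : k < m),
      F.mulVec v ⟨k, by omega⟩ =
        (-f (m - k) / (f (m - k) - α)) * v ⟨k, by omega⟩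
          + (1 / (f (m - k) - α)) * v ⟨k+1, by omega⟩ := by
    intro v k hk
    have hk1 : k + 1 < m + 1 := by omega
    set a : Fin (m+1) := ⟨k, by omega⟩ with ha
    set b : Fin (m+1) := ⟨k+1, hk1⟩ with hb
    have hab : a ≠ b := by simp [ha, hb, Fin.ext_iff]
    rw [Matrix.mulVec, dotProduct,
      ← Finset.sum_subset (Finset.subset_univ ({a, b} : Finset (Fin (m+1))))]
    · rw [Finset.sum_pair hab, hF, hF]
      have hav : (a : ℕ) = k := rfl
      have hbv : (b : ℕ) = k + 1 := rfl
      rw [if_pos (by rw [hav]; exact hk), if_pos rfl,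
        if_pos (by rw [hav]; exact hk), if_neg hab.symm, if_pos (by rw [hbv, hav])]
    · intro l _ hl
      simp only [Finset.mem_insert, Finset.mem_singleton, not_or] at hl
      rw [hF]
      have h1 : l ≠ a := hl.1
      have h2 : (l : ℕ) ≠ k + 1 := fun h => hl.2 (Fin.ext (by simpa using h))
      rw [if_pos (show ((a : Fin (m+1)) : ℕ) < m from hk), if_neg h1, if_neg h2, zero_mul]
  -- row formula for the last row
  have hrowm : ∀ (v : Fin (m+1) → ℂ),
      F.mulVec v ⟨m, by omega⟩ =
        (∏ s ∈ Finset.range m, f (s + 1)) * v ⟨0, by omega⟩ + (-1) * v ⟨m, by omega⟩ := by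
    intro v
    set a : Fin (m+1) := ⟨0, by omega⟩ with ha
    set b : Fin (m+1) := ⟨m, by omega⟩ with hb
    have hab : a ≠ b := by simp [ha, hb, Fin.ext_iff]; omega
    rw [Matrix.mulVec, dotProduct,
      ← Finset.sum_subset (Finset.subset_univ ({a, b} : Finset (Fin (m+1))))]
    · rw [Finset.sum_pair hab, hF, hF]
      rw [if_neg (by simp [hb]), if_pos rfl, if_neg (by simp [hb]),
        if_neg (by simp [ha, hb]; omega), if_pos rfl]
    · intro l _ hl
      simp only [Finset.mem_insert, Finset.mem_singleton, not_or] at hl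
      rw [hF]
      have h1 : (l : ℕ) ≠ 0 := fun h => hl.1 (Fin.ext (by rw [ha]; exact h))
      have h2 : (l : ℕ) ≠ m := fun h => hl.2 (Fin.ext (by simpa using h))
      rw [if_neg (by simp [hb]), if_neg h1, if_neg h2, zero_mul]
  have hK0 : K ⟨0, by omega⟩ = 1 := by rw [hK]; simp
  have hKsucc : ∀ (k : ℕ) (hk : k < m),
      K ⟨k+1, by omega⟩ = K ⟨k, by omega⟩ * f (m - k) := by
    intro k hk
    rw [hK, hK]
    exact Finset.prod_range_succ _ _
  -- Part 1
  have h1 : F.mulVec K = 0 := by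
    funext i
    obtain ⟨i, hi⟩ := i
    rcases lt_or_ge i m with h | h
    · rw [show (⟨i, hi⟩ : Fin (m+1)) = ⟨i, by omega⟩ from rfl, hrow K i h,
        hKsucc i h, Pi.zero_apply]
      field_simp [hd i h]
      ring
    · have him : i = m := by omega
      subst him
      rw [show (⟨i, hi⟩ : Fin (i+1)) = ⟨i, by omega⟩ from rfl, hrowm K, hK0, hK, hprod]
      simp
  refine ⟨h1, le_antisymm ?_ ?_⟩
  · -- ker ≤ span
    intro v hv
    rw [LinearMap.mem_ker, Matrix.mulVecLin_apply] at hv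
    have key : ∀ (n : ℕ) (hn : n < m + 1), v ⟨n, hn⟩ = v ⟨0, by omega⟩ * K ⟨n, hn⟩ := by
      intro n
      induction n with
      | zero => intro hn; rw [hK0, mul_one]
      | succ n ih =>
        intro hn
        have hnm : n < m := by omega
        have hrv := hrow v n hnm
        rw [hv, Pi.zero_apply] at hrv
        have hstep : v ⟨n+1, by omega⟩ = f (m - n) * v ⟨n, by omega⟩ := by
          have hd' := hd n hnm
          field_simp [hd'] at hrv
          have h2 : (v ⟨n+1, by omega⟩ - f (m - n) * v ⟨n, by omega⟩) * (f (m - n) - α) = 0 := by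
            linear_combination (-(f (m - n) - α)) * hrv
          have h3 := (mul_eq_zero.mp h2).resolve_right hd'
          linear_combination h3
        rw [show (⟨n+1, hn⟩ : Fin (m+1)) = ⟨n+1, by omega⟩ from rfl, hstep,
          ih (by omega), hKsucc n hnm]
        ring
    have hvK : v = v ⟨0, by omega⟩ • K := by
      funext i
      obtain ⟨i, hi⟩ := i
      rw [Pi.smul_apply, smul_eq_mul]
      exact key i hi
    rw [hvK]
    exact Submodule.smul_mem _ _ (Submodule.mem_span_singleton_self K)
  · rw [Submodule.span_le, Set.singleton_subset_iff]
    exact LinearMap.mem_ker.mpr (by rw [Matrix.mulVecLin_apply, h1])
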